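/- Let q = 2^r with r ≥ 3, and let G be either SO⁺(2,q) or O⁺(2,q), with elements listed as g₁,...,g_N. Then the 𝔽_2-linear map 𝔽_q → 𝔽_2^N sending a to c(a) = (tr(a·Tr g₁),...,tr(a·Tr g_N)) is injective, and its image is exactly the dual code C(G)^⊥ = {v ∈ 𝔽_2^N : v·u = 0 for all u ∈ C(G)}; in particular it is an 𝔽_2-linear isomorphism from 𝔽_q onto C(G)^⊥. -/

import Mathlib

open Finset Matrix

/-- The quadratic form `θ⁺(x) = ∑ i, x_i x_{n+i}` on `F^{2n}` (columns indexed by `Fin n ⊕ Fin n`). -/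
def thetaPlus (F : Type) [Field F] (n : ℕ) (x : Fin n ⊕ Fin n → F) : F :=
  ∑ i : Fin n, x (Sum.inl i) * x (Sum.inr i)

/-- The orthogonal group `O⁺(2n,q)`: invertible matrices preserving `θ⁺`. -/
noncomputable def OplusGrp (F : Type) [Field F] [Fintype F] [DecidableEq F] (n : ℕ) :
    Finset (Matrix (Fin n ⊕ Fin n) (Fin n ⊕ Fin n) F) := by
  classical
  exact Finset.univ.filter (fun w => IsUnit w ∧
    ∀ x : Fin n ⊕ Fin n → F, thetaPlus F n (w.mulVec x) = thetaPlus F n x)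

/-- `SO⁺(2n,q)`: the kernel of `δ⁺(w) = Tr(B ᵗC)` on `O⁺(2n,q)`,
where `w = [[A,B],[C,D]]` in `n × n` blocks. -/
noncomputable def SOplusGrp (F : Type) [Field F] [Fintype F] [DecidableEq F] (n : ℕ) :
    Finset (Matrix (Fin n ⊕ Fin n) (Fin n ⊕ Fin n) F) := by
  classical
  exact (OplusGrp F n).filter
    (fun w => Matrix.trace (Matrix.toBlocks₁₂ w * (Matrix.toBlocks₂₁ w)ᵀ) = 0)

/-- The trace map `tr(x) = x + x² + ⋯ + x^{2^{r−1}}`, valued in `𝔽₂ = {0,1} ⊆ F`. -/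
def trF (F : Type) [Field F] (r : ℕ) (x : F) : F := ∑ i ∈ Finset.range r, x ^ 2 ^ i

/-- The canonical additive character `λ(x) = (−1)^{tr(x)} ∈ {±1} ⊆ ℤ`. -/
noncomputable def lam (F : Type) [Field F] (r : ℕ) (x : F) : ℤ := by
  classical exact if trF F r x = 0 then 1 else -1

/-- The trace map `tr` viewed as a function into `𝔽₂ = ZMod 2`. -/
noncomputable def tr2 (F : Type) [Field F] (r : ℕ) (x : F) : ZMod 2 := by
  classical exact if trF F r x = 0 then 0 else 1

/-- The Kloosterman sum `K(λ;a) = ∑_{α ∈ F*} λ(α + aα⁻¹)`. -/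
noncomputable def Kl (F : Type) [Field F] [Fintype F] (r : ℕ) (a : F) : ℤ := by
  classical
  exact ∑ α ∈ Finset.univ.filter (fun α : F => α ≠ 0), lam F r (α + a * α⁻¹)

/-- The `m`-dimensional Kloosterman sum
`K_m(λ;a) = ∑_{α₁,…,α_m ∈ F*} λ(α₁ + ⋯ + α_m + aα₁⁻¹⋯α_m⁻¹)`;
for `m = 0` this is `K₀(λ;a) = λ(a)`. -/
noncomputable def Klm (F : Type) [Field F] [Fintype F] (r m : ℕ) (a : F) : ℤ := by
  classical
  exact ∑ v ∈ Finset.univ.filter (fun v : Fin m → F => ∀ i, v i ≠ 0),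
    lam F r ((∑ i, v i) + a * (∏ i, v i)⁻¹)

/-- The power moment `MK^h = ∑_{a ∈ F*} K(λ;a)^h`. -/
noncomputable def MK (F : Type) [Field F] [Fintype F] (r h : ℕ) : ℤ := by
  classical exact ∑ a ∈ Finset.univ.filter (fun a : F => a ≠ 0), (Kl F r a) ^ h

/-- The power moment `MK₂^h = ∑_{a ∈ F*} K₂(λ;a)^h` of 2-dimensional Kloosterman sums. -/
noncomputable def MK2 (F : Type) [Field F] [Fintype F] (r h : ℕ) : ℤ := by
  classical exact ∑ a ∈ Finset.univ.filter (fun a : F => a ≠ 0), (Klm F r 2 a) ^ h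

/-- The binary code `C(G) = {u ∈ 𝔽₂^G : ∑_{g ∈ G} u_g Tr(g) = 0 in F}`. -/
noncomputable def code (F : Type) [Field F] [Fintype F] [DecidableEq F]
    {ι : Type} [Fintype ι] [DecidableEq ι] (G : Finset (Matrix ι ι F)) :
    Finset (↥G → ZMod 2) := by
  classical
  exact Finset.univ.filter
    (fun u => ∑ g : ↥G, (u g).val • Matrix.trace (g : Matrix ι ι F) = 0)

/-- Number of codewords of Hamming weight `j` in the code `C(G)`. -/
noncomputable def wtCount (F : Type) [Field F] [Fintype F] [DecidableEq F]
    {ι : Type} [Fintype ι] [DecidableEq ι] (G : Finset (Matrix ι ι F)) (j : ℕ) : ℕ := by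
  classical
  exact ((code F G).filter
    (fun u => (Finset.univ.filter (fun g : ↥G => u g = 1)).card = j)).card

/-- `t! · S(h,t)` where `S(h,t)` is the Stirling number of the second kind,
`S(h,t) = (1/t!) ∑_{j=0}^{t} (−1)^{t−j} C(t,j) j^h`. -/
def tS (h t : ℕ) : ℤ :=
  ∑ j ∈ Finset.range (t + 1), (-1 : ℤ) ^ (t - j) * (t.choose j : ℤ) * (j : ℤ) ^ h

/-- Binomial coefficient with integer arguments: `0` whenever `k < 0` or `k > n`. -/
def ichoose (n k : ℤ) : ℤ := if 0 ≤ k ∧ k ≤ n then (n.toNat.choose k.toNat : ℤ) else 0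


/-! ### Auxiliary lemmas -/

lemma zmod2_em (c : ZMod 2) : c = 0 ∨ c = 1 := by revert c; decide

lemma charF (F : Type) [Field F] [Fintype F] (r : ℕ) (hF : Fintype.card F = 2 ^ r) :
    CharP F 2 := by
  haveI := ringChar.charP F
  have hp : (ringChar F).Prime := CharP.char_is_prime F (ringChar F)
  have h0 : ((Fintype.card F : ℕ) : F) = 0 := FiniteField.cast_card_eq_zero F
  have hdvd : ringChar F ∣ 2 ^ r := by
    rw [← hF]; exact (CharP.cast_eq_zero_iff F (ringChar F) _).mp h0
  have : ringChar F = 2 :=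
    (Nat.prime_dvd_prime_iff_eq hp Nat.prime_two).mp (hp.dvd_of_dvd_pow hdvd)
  rw [← this]; infer_instance

lemma trF_add (F : Type) [Field F] [CharP F 2] (r : ℕ) (x y : F) :
    trF F r (x + y) = trF F r x + trF F r y := by
  unfold trF
  rw [← Finset.sum_add_distrib]
  exact Finset.sum_congr rfl fun i _ => add_pow_char_pow ..

lemma trF_zero (F : Type) [Field F] (r : ℕ) : trF F r 0 = 0 := by
  unfold trF
  exact Finset.sum_eq_zero fun i _ => zero_pow (by positivity)

lemma trF_mul_self (F : Type) [Field F] [Fintype F] [CharP F 2] (r : ℕ)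
    (hF : Fintype.card F = 2 ^ r) (x : F) : trF F r x * trF F r x = trF F r x := by
  have h1 : trF F r x * trF F r x = ∑ i ∈ Finset.range r, x ^ 2 ^ (i + 1) := by
    rw [← sq, trF, sum_pow_char]
    refine Finset.sum_congr rfl fun i _ => ?_
    rw [← pow_mul, ← pow_succ]
  have h2 : x ^ 2 ^ r = x := by rw [← hF, FiniteField.pow_card]
  have h3 : (∑ i ∈ Finset.range r, x ^ 2 ^ (i + 1)) + x ^ 2 ^ 0
      = trF F r x + x ^ 2 ^ r := by
    rw [← Finset.sum_range_succ' (fun i => x ^ 2 ^ i) r, Finset.sum_range_succ]; rfl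
  have h3' : (∑ i ∈ Finset.range r, x ^ 2 ^ (i + 1)) + x = trF F r x + x := by
    simpa [h2] using h3
  exact add_right_cancel (by rw [h1]; exact h3')

lemma trF_eq_zero_or_one (F : Type) [Field F] [Fintype F] [CharP F 2] (r : ℕ)
    (hF : Fintype.card F = 2 ^ r) (x : F) : trF F r x = 0 ∨ trF F r x = 1 := by
  have h := trF_mul_self F r hF x
  have h0 : trF F r x * (trF F r x - 1) = 0 := by rw [mul_sub, mul_one, h, sub_self]
  rcases mul_eq_zero.mp h0 with h1 | h1
  · exact Or.inl h1
  · exact Or.inr (sub_eq_zero.mp h1)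

lemma exists_trF_ne_zero (F : Type) [Field F] [Fintype F] (r : ℕ) (hr : 1 ≤ r)
    (hF : Fintype.card F = 2 ^ r) : ∃ x : F, trF F r x ≠ 0 := by
  by_contra hall
  push_neg at hall
  set P : Polynomial F := ∑ i ∈ Finset.range r, Polynomial.X ^ 2 ^ i with hP
  have heval : ∀ x : F, P.eval x = trF F r x := by
    intro x; rw [hP, Polynomial.eval_finset_sum]; simp [trF]
  have hdeg : P.natDegree < Fintype.card F := by
    have h1 : P.natDegree ≤ 2 ^ (r - 1) := by
      apply Polynomial.natDegree_sum_le_of_forall_le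
      intro i hi
      rw [Polynomial.natDegree_X_pow]
      exact Nat.pow_le_pow_right (by norm_num)
        (by have := Finset.mem_range.mp hi; omega)
    calc P.natDegree ≤ 2 ^ (r - 1) := h1
      _ < 2 ^ r := Nat.pow_lt_pow_right (by norm_num) (by omega)
      _ = Fintype.card F := hF.symm
  have hP0 : P = 0 := by
    apply Polynomial.eq_zero_of_natDegree_lt_card_of_eval_eq_zero P Function.injective_id
    · intro x; rw [heval]; exact hall x
    · simpa using hdeg
  have hc : P.coeff 1 = 1 := by
    rw [hP, Polynomial.finset_sum_coeff]
    rw [Finset.sum_eq_single_of_mem 0 (Finset.mem_range.mpr (by omega))]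
    · simp
    · intro i _ hi
      rw [Polynomial.coeff_X_pow]
      have h2 : 2 ^ i ≠ 1 := by
        have := Nat.one_lt_two_pow (by omega : i ≠ 0); omega
      simp [h2, hi]
      omega
  rw [hP0] at hc
  simp at hc

lemma keyA (r : ℕ) (hr : 3 ≤ r) (F : Type) [Field F] [Fintype F] [CharP F 2]
    (hF : Fintype.card F = 2 ^ r) (s : F) (hs : s ≠ 0)
    (H : ∀ c : F, c ≠ 0 → trF F r (c + s * c⁻¹) = 0) : False := by
  classical
  obtain ⟨k, rfl⟩ : ∃ k, r = k + 3 := ⟨r - 3, by omega⟩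
  set r := k + 3 with hrdef
  set R : Polynomial F :=
    (∑ i ∈ Finset.range (r - 1), Polynomial.X ^ (2 ^ (r - 1) + 2 ^ i)) +
    (∑ i ∈ Finset.range r, Polynomial.C (s ^ 2 ^ i) * Polynomial.X ^ (2 ^ (r - 1) - 2 ^ i)) +
    Polynomial.X with hR
  have h2k : 1 ≤ 2 ^ k := Nat.one_le_two_pow
  have hdeg : R.natDegree ≤ 2 ^ r - 2 := by
    apply le_trans (Polynomial.natDegree_add_le _ _)
    simp only [Polynomial.natDegree_X]
    apply max_le _ (by simp [hrdef, pow_succ]; omega)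
    apply le_trans (Polynomial.natDegree_add_le _ _)
    apply max_le
    · apply Polynomial.natDegree_sum_le_of_forall_le
      intro i hi
      rw [Polynomial.natDegree_X_pow]
      have hi' : i ≤ r - 2 := by have := Finset.mem_range.mp hi; omega
      have e2 : r - 2 = k + 1 := by omega
      have hle : 2 ^ i ≤ 2 * 2 ^ k := by
        calc 2 ^ i ≤ 2 ^ (r - 2) := Nat.pow_le_pow_right (by norm_num) hi'
          _ = 2 * 2 ^ k := by rw [e2]; ring
      have p1 : (2:ℕ) ^ (r - 1) = 4 * 2 ^ k := by
        rw [show r - 1 = k + 2 from by omega]; ring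
      have p2 : (2:ℕ) ^ r = 8 * 2 ^ k := by rw [hrdef]; ring
      omega
    · apply Polynomial.natDegree_sum_le_of_forall_le
      intro i hi
      apply le_trans (Polynomial.natDegree_C_mul_le _ _)
      rw [Polynomial.natDegree_X_pow]
      have h3 : 2 ^ (r - 1) - 2 ^ i ≤ 2 ^ (r - 1) := Nat.sub_le _ _
      have p1 : (2:ℕ) ^ (r - 1) = 4 * 2 ^ k := by
        rw [show r - 1 = k + 2 from by omega]; ring
      have p2 : (2:ℕ) ^ r = 8 * 2 ^ k := by rw [hrdef]; ring
      omega
  have heval : ∀ c : F, c ≠ 0 → R.eval c = 0 := by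
    intro c hc
    have hq : c ^ 2 ^ r = c := by rw [← hF, FiniteField.pow_card]
    have key : c ^ 2 ^ (r - 1) * trF F r (c + s * c⁻¹)
        = (∑ i ∈ Finset.range r, c ^ (2 ^ (r - 1) + 2 ^ i))
          + ∑ i ∈ Finset.range r, s ^ 2 ^ i * c ^ (2 ^ (r - 1) - 2 ^ i) := by
      unfold trF
      rw [Finset.mul_sum, ← Finset.sum_add_distrib]
      refine Finset.sum_congr rfl fun i hi => ?_
      have hle : 2 ^ i ≤ 2 ^ (r - 1) :=
        Nat.pow_le_pow_right (by norm_num) (by have := Finset.mem_range.mp hi; omega)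
      rw [add_pow_char_pow, mul_pow, pow_add, pow_sub₀ c hc hle, inv_pow]
      ring
    rw [H c hc, mul_zero] at key
    have hsplit : (∑ i ∈ Finset.range r, c ^ (2 ^ (r - 1) + 2 ^ i))
        = (∑ i ∈ Finset.range (r - 1), c ^ (2 ^ (r - 1) + 2 ^ i)) + c := by
      have h4 : r = (r - 1) + 1 := by omega
      rw [h4, Finset.sum_range_succ]
      congr 1
      have he : 2 ^ (r - 1) + 2 ^ (r - 1) = 2 ^ r := by
        rw [show r - 1 = k + 2 from by omega, hrdef]; ring
      rw [show r - 1 + 1 - 1 = r - 1 from by omega, he, hq]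
    rw [hsplit] at key
    have h5 : R.eval c = (∑ i ∈ Finset.range (r - 1), c ^ (2 ^ (r - 1) + 2 ^ i))
        + (∑ i ∈ Finset.range r, s ^ 2 ^ i * c ^ (2 ^ (r - 1) - 2 ^ i)) + c := by
      simp [hR, Polynomial.eval_finset_sum]
    rw [h5]
    linear_combination key.symm
  have hR0 : R = 0 := by
    apply Polynomial.eq_zero_of_natDegree_lt_card_of_eval_eq_zero' R
      (Finset.univ.filter (fun c : F => c ≠ 0))
    · intro c hcmem
      exact heval c (by simpa using hcmem)
    · have hcard : (Finset.univ.filter (fun c : F => c ≠ 0)).card = 2 ^ r - 1 := by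
        rw [Finset.filter_ne', Finset.card_erase_of_mem (Finset.mem_univ _)]
        simp [hF]
      rw [hcard]
      have h6 : (2:ℕ) ^ r ≥ 4 := by
        calc (2:ℕ)^r ≥ 2 ^ 3 := Nat.pow_le_pow_right (by norm_num) (by omega)
          _ ≥ 4 := by norm_num
      omega
  have hzero : R.eval 0 = s ^ 2 ^ (r - 1) := by
    rw [hR]
    simp only [Polynomial.eval_add, Polynomial.eval_finset_sum, Polynomial.eval_pow,
      Polynomial.eval_X, Polynomial.eval_mul, Polynomial.eval_C]
    rw [Finset.sum_eq_zero, Finset.sum_eq_single_of_mem (r - 1)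
      (Finset.mem_range.mpr (by omega))]
    · simp
    · intro i hi hne
      have h7 : 2 ^ i < 2 ^ (r - 1) :=
        Nat.pow_lt_pow_right (by norm_num) (by have := Finset.mem_range.mp hi; omega)
      rw [zero_pow (by omega), mul_zero]
    · intro i hi
      exact zero_pow (by positivity)
  rw [hR0] at hzero
  simp only [Polynomial.eval_zero] at hzero
  exact hs ((pow_eq_zero_iff (by positivity : 2 ^ (r - 1) ≠ 0)).mp hzero.symm)

lemma tr2_eq_zero_iff (F : Type) [Field F] (r : ℕ) (x : F) :
    tr2 F r x = 0 ↔ trF F r x = 0 := by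
  unfold tr2
  split <;> simp_all

lemma tr2_zero (F : Type) [Field F] (r : ℕ) : tr2 F r 0 = 0 :=
  (tr2_eq_zero_iff F r 0).mpr (trF_zero F r)

lemma tr2_add (F : Type) [Field F] [Fintype F] [CharP F 2] (r : ℕ)
    (hF : Fintype.card F = 2 ^ r) (x y : F) :
    tr2 F r (x + y) = tr2 F r x + tr2 F r y := by
  have hxy := trF_add F r x y
  have h2 : (1 : F) + 1 = 0 := by
    have := CharP.cast_eq_zero F 2
    push_cast at this
    linear_combination this
  unfold tr2
  rcases trF_eq_zero_or_one F r hF x with hx | hx <;>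
    rcases trF_eq_zero_or_one F r hF y with hy | hy
  · rw [hx, hy, add_zero] at hxy
    simp [hx, hy, hxy]
  · rw [hx, hy, zero_add] at hxy
    simp [hx, hy, hxy]
  · rw [hx, hy, add_zero] at hxy
    simp [hx, hy, hxy]
  · rw [hx, hy, h2] at hxy
    simp [hx, hy, hxy]
    decide

lemma val_smul_eq (F : Type) [Field F] [Algebra (ZMod 2) F] (c : ZMod 2) (x : F) :
    c.val • x = c • x := by
  rcases zmod2_em c with rfl | rfl
  · simp
  · simp [ZMod.val_one]

/-- Every `ZMod 2`-linear functional on `F` is `x ↦ tr2 (a * x)` for some `a`. -/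
lemma dual_repr (F : Type) [Field F] [Fintype F] [CharP F 2] [Algebra (ZMod 2) F]
    (r : ℕ) (hr : 1 ≤ r) (hF : Fintype.card F = 2 ^ r)
    (gl : Module.Dual (ZMod 2) F) : ∃ a : F, ∀ x : F, gl x = tr2 F r (a * x) := by
  classical
  have tr2_smul : ∀ (c : ZMod 2) (x : F), tr2 F r (c • x) = c * tr2 F r x := by
    intro c x
    rcases zmod2_em c with rfl | rfl
    · simp [tr2_zero]
    · simp
  let Φ : F → Module.Dual (ZMod 2) F := fun a =>
    { toFun := fun x => tr2 F r (a * x)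
      map_add' := fun x y => by
        show tr2 F r (a * (x + y)) = tr2 F r (a * x) + tr2 F r (a * y)
        rw [mul_add]; exact tr2_add F r hF _ _
      map_smul' := fun c x => by
        simp only [RingHom.id_apply, smul_eq_mul]
        rw [mul_smul_comm, tr2_smul] }
  have hΦ : ∀ a x, Φ a x = tr2 F r (a * x) := fun a x => rfl
  have hinj : Function.Injective Φ := by
    intro a b hab
    by_contra hne
    have hd : a - b ≠ 0 := sub_ne_zero.mpr hne
    obtain ⟨x₀, hx₀⟩ := exists_trF_ne_zero F r hr hF
    set x := (a - b)⁻¹ * x₀ with hx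
    have h1 : tr2 F r (a * x) = tr2 F r (b * x) := by
      rw [← hΦ, ← hΦ, hab]
    have h2 : tr2 F r (b * x) + tr2 F r ((a - b) * x) = tr2 F r (b * x) + 0 := by
      rw [← tr2_add F r hF, show b * x + (a - b) * x = a * x from by ring, h1, add_zero]
    have h3 := add_left_cancel h2
    have h5 : (a - b) * x = x₀ := by
      rw [hx, ← mul_assoc, mul_inv_cancel₀ hd, one_mul]
    rw [h5, tr2_eq_zero_iff] at h3
    exact hx₀ h3
  haveI : Finite (Module.Dual (ZMod 2) F) :=
    Finite.of_injective (fun f => (f : F → ZMod 2)) DFunLike.coe_injective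
  letI : Fintype (Module.Dual (ZMod 2) F) := Fintype.ofFinite _
  have hcard : Fintype.card F = Fintype.card (Module.Dual (ZMod 2) F) := by
    rw [Module.card_eq_pow_finrank (K := ZMod 2) (V := F),
      Module.card_eq_pow_finrank (K := ZMod 2) (V := Module.Dual (ZMod 2) F),
      Subspace.dual_finrank_eq]
  have hbij : Function.Bijective Φ :=
    (Fintype.bijective_iff_injective_and_card Φ).mpr ⟨hinj, hcard⟩
  obtain ⟨a, ha⟩ := hbij.2 gl
  exact ⟨a, fun x => by rw [← ha]; rfl⟩

/-- The diagonal element `diag(α, α⁻¹)` of `O⁺(2,q)`. -/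
def Dm (F : Type) [Field F] (α : F) : Matrix (Fin 1 ⊕ Fin 1) (Fin 1 ⊕ Fin 1) F :=
  Matrix.diagonal (Sum.elim (fun _ => α) (fun _ => α⁻¹))

lemma Dm_trace (F : Type) [Field F] (α : F) : Matrix.trace (Dm F α) = α + α⁻¹ := by
  rw [Dm, Matrix.trace_diagonal]
  rw [Fintype.sum_sum_type]
  simp

lemma Dm_mem_O (F : Type) [Field F] [Fintype F] [DecidableEq F] (α : F) (hα : α ≠ 0) :
    Dm F α ∈ OplusGrp F 1 := by
  rw [OplusGrp, Finset.mem_filter]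
  refine ⟨Finset.mem_univ _, ?_, ?_⟩
  · rw [Matrix.isUnit_iff_isUnit_det, Dm, Matrix.det_diagonal]
    have h1 : ∏ i : Fin 1 ⊕ Fin 1, Sum.elim (fun _ => α) (fun _ => α⁻¹) i = 1 := by
      rw [Fintype.prod_sum_type]
      simp [mul_inv_cancel₀ hα]
    rw [h1]; exact isUnit_one
  · intro x
    unfold thetaPlus
    rw [Fin.sum_univ_one, Fin.sum_univ_one]
    rw [Dm, Matrix.mulVec_diagonal, Matrix.mulVec_diagonal]
    simp only [Sum.elim_inl, Sum.elim_inr]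
    rw [mul_mul_mul_comm, mul_inv_cancel₀ hα, one_mul]

lemma Dm_mem_SO (F : Type) [Field F] [Fintype F] [DecidableEq F] (α : F) (hα : α ≠ 0) :
    Dm F α ∈ SOplusGrp F 1 := by
  rw [SOplusGrp, Finset.mem_filter]
  refine ⟨Dm_mem_O F α hα, ?_⟩
  have hB : Matrix.toBlocks₁₂ (Dm F α) = 0 := by
    ext i j
    rw [Matrix.toBlocks₁₂]
    simp only [Matrix.of_apply, Matrix.zero_apply, Dm]
    exact Matrix.diagonal_apply_ne _ (by simp)
  rw [hB, Matrix.zero_mul, Matrix.trace_zero]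

theorem stmt15 (r : ℕ) (hr : 3 ≤ r) (F : Type) [Field F] [Fintype F] [DecidableEq F]
    (hF : Fintype.card F = 2 ^ r)
    (G : Finset (Matrix (Fin 1 ⊕ Fin 1) (Fin 1 ⊕ Fin 1) F))
    (hG : G = SOplusGrp F 1 ∨ G = OplusGrp F 1) :
    Function.Injective
      (fun a : F => fun g : ↥G => tr2 F r (a * Matrix.trace (g : Matrix (Fin 1 ⊕ Fin 1) (Fin 1 ⊕ Fin 1) F))) ∧
    (∀ a b : F, ∀ g : ↥G,
      tr2 F r ((a + b) * Matrix.trace (g : Matrix (Fin 1 ⊕ Fin 1) (Fin 1 ⊕ Fin 1) F)) =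
        tr2 F r (a * Matrix.trace (g : Matrix (Fin 1 ⊕ Fin 1) (Fin 1 ⊕ Fin 1) F)) + tr2 F r (b * Matrix.trace (g : Matrix (Fin 1 ⊕ Fin 1) (Fin 1 ⊕ Fin 1) F))) ∧
    Set.range (fun a : F => fun g : ↥G => tr2 F r (a * Matrix.trace (g : Matrix (Fin 1 ⊕ Fin 1) (Fin 1 ⊕ Fin 1) F))) =
      {v : ↥G → ZMod 2 | ∀ u ∈ code F G, ∑ g : ↥G, v g * u g = 0} := by
  classical
  haveI : CharP F 2 := charF F r hF
  letI : Algebra (ZMod 2) F := ZMod.algebra F 2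
  have hr1 : 1 ≤ r := by omega
  have hmemG : ∀ α : F, α ≠ 0 → Dm F α ∈ G := by
    intro α hα
    rcases hG with rfl | rfl
    · exact Dm_mem_SO F α hα
    · exact Dm_mem_O F α hα
  set tG : ↥G → F := fun g => Matrix.trace (g : Matrix (Fin 1 ⊕ Fin 1) (Fin 1 ⊕ Fin 1) F)
    with htG
  set φ : F → (↥G → ZMod 2) := fun a => fun g => tr2 F r (a * tG g) with hφ
  have hinj : Function.Injective φ := by
    intro a b hab
    by_contra hne
    have hd : a - b ≠ 0 := sub_ne_zero.mpr hne
    have H : ∀ α : F, α ≠ 0 → trF F r ((a - b) * (α + α⁻¹)) = 0 := by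
      intro α hα
      have h1 : tr2 F r (a * tG ⟨Dm F α, hmemG α hα⟩) = tr2 F r (b * tG ⟨Dm F α, hmemG α hα⟩) :=
        congrFun hab ⟨Dm F α, hmemG α hα⟩
      have htr : tG ⟨Dm F α, hmemG α hα⟩ = α + α⁻¹ := Dm_trace F α
      rw [htr] at h1
      set t := α + α⁻¹
      have h2 : tr2 F r (b * t) + tr2 F r ((a - b) * t) = tr2 F r (b * t) + 0 := by
        rw [← tr2_add F r hF, show b * t + (a - b) * t = a * t from by ring, h1, add_zero]
      exact (tr2_eq_zero_iff F r _).mp (add_left_cancel h2)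
    apply keyA r hr F hF ((a - b) * (a - b)) (mul_ne_zero hd hd)
    intro c hc
    have hα : (a - b)⁻¹ * c ≠ 0 := mul_ne_zero (inv_ne_zero hd) hc
    have h3 := H ((a - b)⁻¹ * c) hα
    have he : (a - b) * ((a - b)⁻¹ * c + ((a - b)⁻¹ * c)⁻¹)
        = c + (a - b) * (a - b) * c⁻¹ := by
      field_simp
    rw [he] at h3
    exact h3
  refine ⟨hinj, ?_, ?_⟩
  · intro a b g
    rw [add_mul]
    exact tr2_add F r hF _ _
  · -- range = dual code
    let T : F →+ ZMod 2 := AddMonoidHom.mk' (tr2 F r) (tr2_add F r hF)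
    have hT : ∀ x : F, T x = tr2 F r x := fun x => rfl
    ext v
    simp only [Set.mem_range, Set.mem_setOf_eq]
    constructor
    · rintro ⟨a, rfl⟩ u hu
      have hcode : ∑ g : ↥G, (u g).val • tG g = 0 := by
        have h := hu
        rw [code, Finset.mem_filter] at h
        exact h.2
      have step1 : ∑ g : ↥G, tr2 F r (a * tG g) * u g
          = ∑ g : ↥G, T ((u g).val • (a * tG g)) := by
        refine Finset.sum_congr rfl fun g _ => ?_
        rcases zmod2_em (u g) with hug | hug <;> rw [hug]
        · simp [hT, tr2_zero]
        · simp [hT, ZMod.val_one]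
      calc ∑ g : ↥G, tr2 F r (a * tG g) * u g
          = ∑ g : ↥G, T ((u g).val • (a * tG g)) := step1
        _ = T (∑ g : ↥G, (u g).val • (a * tG g)) := (map_sum T _ _).symm
        _ = T (a * ∑ g : ↥G, (u g).val • tG g) := by
            rw [Finset.mul_sum]
            congr 1
            exact Finset.sum_congr rfl fun g _ => (mul_smul_comm _ _ _).symm
        _ = 0 := by rw [hcode, mul_zero, map_zero]
    · intro hv
      let ψ : (↥G → ZMod 2) →ₗ[ZMod 2] F :=
        { toFun := fun u => ∑ g : ↥G, u g • tG g
          map_add' := fun u w => by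
            simp only [Pi.add_apply, add_smul]
            rw [Finset.sum_add_distrib]
          map_smul' := fun c u => by
            simp only [Pi.smul_apply, smul_eq_mul, RingHom.id_apply]
            rw [Finset.smul_sum]
            exact Finset.sum_congr rfl fun g _ => mul_smul c (u g) (tG g) }
      let fv : (↥G → ZMod 2) →ₗ[ZMod 2] ZMod 2 :=
        { toFun := fun u => ∑ g : ↥G, v g * u g
          map_add' := fun u w => by
            simp only [Pi.add_apply, mul_add]
            rw [Finset.sum_add_distrib]
          map_smul' := fun c u => by
            simp only [Pi.smul_apply, smul_eq_mul, RingHom.id_apply, Finset.mul_sum]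
            exact Finset.sum_congr rfl fun g _ => by ring }
      have hker : LinearMap.ker ψ ≤ LinearMap.ker fv := by
        intro u hu
        rw [LinearMap.mem_ker] at hu ⊢
        have hmem : u ∈ code F G := by
          rw [code, Finset.mem_filter]
          refine ⟨Finset.mem_univ _, ?_⟩
          have : ∑ g : ↥G, (u g).val • tG g = ∑ g : ↥G, u g • tG g :=
            Finset.sum_congr rfl fun g _ => val_smul_eq F (u g) (tG g)
          simpa [htG] using this.trans hu
        exact hv u hmem
      let f₁ := (LinearMap.ker ψ).liftQ fv hker
      let e := ψ.quotKerEquivRange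
      let ℓ₀ : LinearMap.range ψ →ₗ[ZMod 2] ZMod 2 := f₁ ∘ₗ (e.symm : _ ≃ₗ[ZMod 2] _).toLinearMap
      obtain ⟨gl, hgl⟩ := LinearMap.exists_extend ℓ₀
      have hfac : ∀ u, gl (ψ u) = fv u := by
        intro u
        have h1 : e (Submodule.Quotient.mk u) = ⟨ψ u, LinearMap.mem_range_self ψ u⟩ :=
          Subtype.ext (ψ.quotKerEquivRange_apply_mk u)
        have h2 := LinearMap.congr_fun hgl ⟨ψ u, LinearMap.mem_range_self ψ u⟩
        rw [LinearMap.comp_apply] at h2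
        have h2' : gl (ψ u) = ℓ₀ ⟨ψ u, LinearMap.mem_range_self ψ u⟩ := h2
        rw [h2']
        have h2'' : ℓ₀ ⟨ψ u, LinearMap.mem_range_self ψ u⟩
            = f₁ (e.symm ⟨ψ u, LinearMap.mem_range_self ψ u⟩) := rfl
        rw [h2'', ← h1, LinearEquiv.symm_apply_apply]
        exact Submodule.liftQ_apply _ fv u
      obtain ⟨a, ha⟩ := dual_repr F r hr1 hF gl
      refine ⟨a, funext fun g => ?_⟩
      set u₀ : ↥G → ZMod 2 := fun h => if h = g then 1 else 0 with hu₀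
      have h3 : ψ u₀ = tG g := by
        simp only [ψ, u₀, LinearMap.coe_mk, AddHom.coe_mk]
        rw [Finset.sum_eq_single_of_mem g (Finset.mem_univ g)]
        · simp
        · intro h _ hne
          simp [hne]
      have h4 : fv u₀ = v g := by
        simp only [fv, u₀, LinearMap.coe_mk, AddHom.coe_mk]
        rw [Finset.sum_eq_single_of_mem g (Finset.mem_univ g)]
        · simp
        · intro h _ hne
          simp [hne]
      calc tr2 F r (a * tG g) = gl (tG g) := (ha _).symm
        _ = gl (ψ u₀) := by rw [h3]
        _ = fv u₀ := hfac _
        _ = v g := h4
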